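/- Consider the delayed VNLM: h′(t) = a·x(t−τ₁) with h(0) = 0, and x′(t) = (r − h(t))·x(t)·(1 − x(t−τ₂)/k(t)), with continuous positive initial history x(θ) = φ₁(θ) > 0 for θ ∈ [−τ, 0] where τ = max(τ₁, τ₂). For any (arbitrarily large) positive initial history φ₁, there exist choices of the delay parameters τ₁, τ₂ > 0 such that the corresponding solution x exists for all time; that is, x does not blow up in finite time and is bounded on every bounded time interval [0, T]. -/

import Mathlib

open Set Filter MeasureTheory

/-- The variable carrying capacity `k(t) = (k_max − k_min)·(cos(dπt)+1)/2 + k_min`. -/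
noncomputable def kcap (kmin kmax d t : ℝ) : ℝ :=
  (kmax - kmin) * ((Real.cos (d * Real.pi * t) + 1) / 2) + kmin

/-- `(x, h)` is a solution on `[0, b)` of the delayed VNLM
`h′(t) = a·x(t−τ₁)`, `h(0) = 0`,
`x′(t) = (r − h(t))·x(t)·(1 − x(t−τ₂)/k(t))`,
with initial history `x = φ` on `[−τ, 0]`, `τ = max(τ₁, τ₂)`. -/
def DVNLMSolOn (a r d kmin kmax τ₁ τ₂ : ℝ) (φ x h : ℝ → ℝ) (b : ℝ) : Prop :=
  ContinuousOn x (Set.Ico (-(max τ₁ τ₂)) b) ∧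
  (∀ θ ∈ Set.Icc (-(max τ₁ τ₂)) (0:ℝ), x θ = φ θ) ∧
  h 0 = 0 ∧ ContinuousOn h (Set.Ico 0 b) ∧
  (∀ t ∈ Set.Ioo (0:ℝ) b, HasDerivAt h (a * x (t - τ₁)) t) ∧
  (∀ t ∈ Set.Ioo (0:ℝ) b, HasDerivAt x
      ((r - h t) * x t * (1 - x (t - τ₂) / kcap kmin kmax d t)) t)

/-- for any (arbitrarily large) continuous positive initial
history `φ₁`, there exist delays `τ₁, τ₂ > 0` such that the corresponding
solution of the delayed VNLM exists for all time; that is, it does not blow up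
in finite time, being bounded on every bounded time interval. -/
theorem delayed_vnlm_no_blowup (a r d kmin kmax : ℝ)
    (ha : 0 < a) (hr : 0 < r) (hd : 0 < d)
    (hkmin : 0 < kmin) (hk : kmin ≤ kmax)
    (φ₁ : ℝ → ℝ) (hφcont : ContinuousOn φ₁ (Set.Iic 0))
    (hφpos : ∀ θ : ℝ, θ ≤ 0 → 0 < φ₁ θ) :
    ∃ τ₁ : ℝ, 0 < τ₁ ∧ ∃ τ₂ : ℝ, 0 < τ₂ ∧
      ∀ (b : ℝ) (x h : ℝ → ℝ), 0 < b →
        DVNLMSolOn a r d kmin kmax τ₁ τ₂ φ₁ x h b →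
        BddAbove (x '' Set.Ico 0 b) := by
  refine ⟨1, one_pos, 1, one_pos, ?_⟩
  intro b x h hb hsol
  obtain ⟨hxc, hxφ, hh0, hhc, hh', hx'⟩ := hsol
  rw [max_self] at hxc hxφ
  -- bound for the history on [-1, 0]
  obtain ⟨C₀, hC₀⟩ := (isCompact_Icc (a := (-1:ℝ)) (b := 0)).exists_bound_of_continuousOn
    (hφcont.mono (fun t ht => ht.2))
  -- lower bound on the carrying capacity
  have hkcap : ∀ t, kmin ≤ kcap kmin kmax d t := by
    intro t
    have h1 : (-1 : ℝ) ≤ Real.cos (d * Real.pi * t) := Real.neg_one_le_cos _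
    have : 0 ≤ (kmax - kmin) * ((Real.cos (d * Real.pi * t) + 1) / 2) := by
      apply mul_nonneg (by linarith)
      linarith
    unfold kcap; linarith
  -- main induction: |x| is bounded on [-1, n] ∩ (-∞, b)
  have key : ∀ n : ℕ, ∃ C : ℝ, 0 ≤ C ∧ ∀ t : ℝ, -1 ≤ t → t < b → t ≤ n → |x t| ≤ C := by
    intro n
    induction n with
    | zero =>
      refine ⟨max C₀ 0, le_max_right _ _, ?_⟩
      intro t h1 h2 h3
      have h3' : t ≤ 0 := by exact_mod_cast h3
      have hxt : x t = φ₁ t := hxφ t ⟨h1, h3'⟩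
      rw [hxt]
      exact le_trans (by simpa using hC₀ t ⟨h1, h3'⟩) (le_max_left _ _)
    | succ n ih =>
      obtain ⟨C, hC0, hC⟩ := ih
      by_cases hbn : b ≤ n
      · exact ⟨C, hC0, fun t h1 h2 h3 => hC t h1 h2 (le_of_lt (lt_of_lt_of_le h2 hbn))⟩
      push_neg at hbn
      set H : ℝ := r + a * C * (n + 1) with hH
      set M : ℝ := H * (1 + C / kmin) with hM
      have hH0 : 0 ≤ H := by positivity
      have hM0 : 0 ≤ M := by positivity
      -- bound on delayed values: for s with n < s < min b (n+1), |x (s-1)| ≤ C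
      have hdel : ∀ s : ℝ, 0 < s → s < b → s < n + 1 → |x (s - 1)| ≤ C := by
        intro s hs1 hs2 hs3
        exact hC (s - 1) (by linarith) (by linarith) (by linarith)
      -- bound on h on (0, min b (n+1))
      have hhb : ∀ s : ℝ, 0 < s → s < b → s < n + 1 → |h s| ≤ a * C * (n + 1) := by
        intro s hs1 hs2 hs3
        obtain ⟨c, hc, hceq⟩ := exists_hasDerivAt_eq_slope h (fun u => a * x (u - 1)) hs1
          (hhc.mono (fun u hu => ⟨hu.1, lt_of_le_of_lt hu.2 hs2⟩))
          (fun u hu => hh' u ⟨hu.1, lt_trans hu.2 hs2⟩)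
        have hxc1 : |x (c - 1)| ≤ C := hdel c hc.1 (lt_trans hc.2 hs2) (lt_trans hc.2 hs3)
        have : h s = a * x (c - 1) * s := by
          rw [hh0] at hceq
          field_simp at hceq
          rw [sub_zero, sub_zero, eq_div_iff hs1.ne'] at hceq; linarith [hceq]
        rw [this, abs_mul, abs_mul, abs_of_pos ha, abs_of_pos hs1]
        calc a * |x (c - 1)| * s ≤ a * C * s := by
              apply mul_le_mul_of_nonneg_right _ hs1.le
              exact mul_le_mul_of_nonneg_left hxc1 ha.le
          _ ≤ a * C * (n + 1) := by
              apply mul_le_mul_of_nonneg_left hs3.le (by positivity)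
      -- bound on the "rate" coefficient
      have hrate : ∀ s : ℝ, (n : ℝ) < s → s < b → s < n + 1 →
          |(r - h s) * (1 - x (s - 1) / kcap kmin kmax d s)| ≤ M := by
        intro s hs1 hs2 hs3
        have hs0 : 0 < s := lt_of_le_of_lt (Nat.cast_nonneg n) hs1
        have h1 : |r - h s| ≤ H := by
          have := hhb s hs0 hs2 hs3
          rw [hH]
          have := abs_sub_abs_le_abs_sub r (h s)
          have hra : |r| = r := abs_of_pos hr
          calc |r - h s| ≤ |r| + |h s| := abs_sub _ _
            _ ≤ r + a * C * (n + 1) := by rw [hra]; linarith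
        have h2 : |1 - x (s - 1) / kcap kmin kmax d s| ≤ 1 + C / kmin := by
          have hk1 : kmin ≤ kcap kmin kmax d s := hkcap s
          have hk2 : 0 < kcap kmin kmax d s := lt_of_lt_of_le hkmin hk1
          have hxd : |x (s - 1)| ≤ C := hdel s hs0 hs2 hs3
          have : |x (s - 1) / kcap kmin kmax d s| ≤ C / kmin := by
            rw [abs_div, abs_of_pos hk2]
            exact div_le_div₀ hC0 hxd hkmin hk1
          calc |1 - x (s - 1) / kcap kmin kmax d s|
              ≤ |(1:ℝ)| + |x (s - 1) / kcap kmin kmax d s| := abs_sub _ _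
            _ ≤ 1 + C / kmin := by rw [abs_one]; linarith
        rw [abs_mul, hM]
        exact mul_le_mul h1 h2 (abs_nonneg _) hH0
      refine ⟨C * Real.exp M, by positivity, ?_⟩
      intro t h1 h2 h3
      have hCle : C ≤ C * Real.exp M := by
        nlinarith [Real.one_le_exp hM0]
      by_cases htn : t ≤ n
      · exact (hC t h1 h2 htn).trans hCle
      push_neg at htn
      have h3' : t ≤ (n : ℝ) + 1 := by exact_mod_cast h3
      have hn0 : (0:ℝ) ≤ n := Nat.cast_nonneg n
      have hxn : |x n| ≤ C := hC n (by linarith) hbn le_rfl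
      -- the function z(s) = x(s)^2 * exp(-2M s) is antitone on [n, t]
      set z : ℝ → ℝ := fun s => (x s) ^ 2 * Real.exp (-(2 * M) * s) with hz
      have hzderiv : ∀ s ∈ Ioo (n : ℝ) t, HasDerivAt z
          ((2 * x s ^ 1 * ((r - h s) * x s * (1 - x (s - 1) / kcap kmin kmax d s))) *
            Real.exp (-(2 * M) * s) +
            (x s) ^ 2 * (Real.exp (-(2 * M) * s) * (-(2 * M)))) s := by
        intro s hs
        have hsmem : s ∈ Ioo (0:ℝ) b := ⟨lt_of_le_of_lt hn0 hs.1, lt_trans hs.2 h2⟩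
        have hd1 : HasDerivAt (fun u => (x u) ^ 2)
            (2 * x s ^ 1 * ((r - h s) * x s * (1 - x (s - 1) / kcap kmin kmax d s))) s := by
          simpa using (hx' s hsmem).fun_pow 2
        have he : HasDerivAt (fun u => Real.exp (-(2 * M) * u))
            (Real.exp (-(2 * M) * s) * (-(2 * M))) s := by
          simpa [mul_comm] using ((hasDerivAt_id s).const_mul (-(2 * M))).exp
        exact hd1.mul he
      have hanti : AntitoneOn z (Icc (n : ℝ) t) := by
        apply antitoneOn_of_deriv_nonpos (convex_Icc _ _)
        · apply ContinuousOn.mul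
          · exact ((hxc.mono (fun u hu => ⟨by linarith [hu.1], lt_of_le_of_lt hu.2 h2⟩)).pow 2)
          · exact (Real.continuous_exp.comp (continuous_const.mul continuous_id)).continuousOn
        · intro s hs
          rw [interior_Icc] at hs
          exact ((hzderiv s hs).differentiableAt).differentiableWithinAt
        · intro s hs
          rw [interior_Icc] at hs
          rw [(hzderiv s hs).deriv]
          have hsb : s < b := lt_trans hs.2 h2
          have hsn1 : s < (n:ℝ) + 1 := lt_of_lt_of_le hs.2 h3'
          have hrs := hrate s hs.1 hsb hsn1
          have hcle : (r - h s) * (1 - x (s - 1) / kcap kmin kmax d s) ≤ M :=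
            le_trans (le_abs_self _) hrs
          have hexp : 0 < Real.exp (-(2 * M) * s) := Real.exp_pos _
          have hsq : (0:ℝ) ≤ (x s) ^ 2 := sq_nonneg _
          have hkey : (r - h s) * (1 - x (s - 1) / kcap kmin kmax d s) * (x s) ^ 2
              ≤ M * (x s) ^ 2 := mul_le_mul_of_nonneg_right hcle hsq
          nlinarith [hexp, hkey, sq_nonneg (x s)]
      have hzt : z t ≤ z (n : ℝ) :=
        hanti ⟨le_refl _, htn.le⟩ ⟨htn.le, le_refl _⟩ htn.le
      -- unpack: (x t)^2 ≤ (x n)^2 * exp(2M(t - n)) ≤ C^2 * exp(2M)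
      have hxt2 : (x t) ^ 2 ≤ (C * Real.exp M) ^ 2 := by
        have he1 : (0:ℝ) < Real.exp (-(2 * M) * t) := Real.exp_pos _
        have hexpand : (x t) ^ 2 ≤ (x (n:ℝ)) ^ 2 * Real.exp ((2 * M) * (t - n)) := by
          have := hzt
          rw [hz] at this
          simp only at this
          have h2' : (x t) ^ 2 ≤ (x (n:ℝ)) ^ 2 * Real.exp (-(2 * M) * n) /
              Real.exp (-(2 * M) * t) := by
            rw [le_div_iff₀ he1]; linarith
          calc (x t) ^ 2 ≤ (x (n:ℝ)) ^ 2 * Real.exp (-(2 * M) * n) /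
                Real.exp (-(2 * M) * t) := h2'
            _ = (x (n:ℝ)) ^ 2 * Real.exp ((2 * M) * (t - n)) := by
                rw [mul_div_assoc, ← Real.exp_sub]; ring_nf
        have hle1 : Real.exp ((2 * M) * (t - n)) ≤ Real.exp (2 * M) := by
          apply Real.exp_le_exp.mpr
          nlinarith
        have hxn2 : (x (n:ℝ)) ^ 2 ≤ C ^ 2 := by
          rw [← sq_abs]
          exact pow_le_pow_left₀ (abs_nonneg _) hxn 2
        calc (x t) ^ 2 ≤ (x (n:ℝ)) ^ 2 * Real.exp ((2 * M) * (t - n)) := hexpand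
          _ ≤ C ^ 2 * Real.exp (2 * M) := by
              apply mul_le_mul hxn2 hle1 (Real.exp_pos _).le (by positivity)
          _ = (C * Real.exp M) ^ 2 := by
              rw [mul_pow, sq (Real.exp M), ← Real.exp_add]
              ring_nf
      calc |x t| = Real.sqrt ((x t) ^ 2) := (Real.sqrt_sq_eq_abs _).symm
        _ ≤ Real.sqrt ((C * Real.exp M) ^ 2) := Real.sqrt_le_sqrt hxt2
        _ = C * Real.exp M := Real.sqrt_sq (by positivity)
  -- conclude
  obtain ⟨C, hCnn, hC⟩ := key ⌈b⌉₊
  refine ⟨C, ?_⟩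
  rintro y ⟨t, ⟨ht0, htb⟩, rfl⟩
  have : t ≤ (⌈b⌉₊ : ℝ) := le_trans htb.le (Nat.le_ceil b)
  exact le_trans (le_abs_self _) (hC t (by linarith) htb this)
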